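/- Let (Ω, ℱ, (ℱ_n)_{n=0}^N, μ) be a filtered probability space and (S_n) an adapted μ-integrable ℝ^d-valued process that is a martingale under μ. For any finite sequence h_1,…,h_N of ℝ^d-valued ℱ_{n−1}-measurable functions, if E^μ[((h·S)_N)⁻] < ∞ where (h·S)_N := Σ_{n=1}^N h_n·(S_n − S_{n−1}), then (h·S)_N is μ-integrable and E^μ[(h·S)_N] = 0. -/

import Mathlib

set_option autoImplicit false
set_option maxHeartbeats 1000000
set_option linter.unusedSectionVars false

open MeasureTheory Filter Topology ENNReal

section Aux

variable {Ω : Type*} {m0 : MeasurableSpace Ω} {μ : Measure Ω} [IsProbabilityMeasure μ]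

/-- Each component of a martingale difference has vanishing conditional expectation. -/
lemma aux_comp_condexp_zero (ℱ : Filtration ℕ m0) {d : ℕ} {S : ℕ → Ω → (Fin d → ℝ)}
    (hmart : Martingale S ℱ μ) (n : ℕ) (i : Fin d) :
    μ[fun ω => S (n+1) ω i - S n ω i | ℱ n] =ᵐ[μ] 0 := by
  have hintc : ∀ k, Integrable (fun ω => S k ω i) μ := fun k =>
    (ContinuousLinearMap.proj (R := ℝ) (φ := fun _ : Fin d => ℝ) i).integrable_comp
      (hmart.integrable k)
  have hsm : ∀ k, StronglyMeasurable[ℱ k] (fun ω => S k ω i) := fun k =>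
    ((continuous_apply i).comp_stronglyMeasurable (hmart.stronglyAdapted k))
  have h1 : (fun ω => S n ω i) =ᵐ[μ] μ[fun ω => S (n+1) ω i | ℱ n] := by
    refine ae_eq_condExp_of_forall_setIntegral_eq (ℱ.le n) (hintc (n+1))
      (fun s _ _ => (hintc n).integrableOn) (fun s hs _ => ?_) ?_
    · have := hmart.setIntegral_eq (Nat.le_succ n) hs
      have e1 : (∫ ω in s, S n ω ∂μ) i = ∫ ω in s, S n ω i ∂μ :=
        ((ContinuousLinearMap.proj (R := ℝ) (φ := fun _ : Fin d => ℝ) i).integral_comp_comm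
          ((hmart.integrable n).integrableOn)).symm
      have e2 : (∫ ω in s, S (n+1) ω ∂μ) i = ∫ ω in s, S (n+1) ω i ∂μ :=
        ((ContinuousLinearMap.proj (R := ℝ) (φ := fun _ : Fin d => ℝ) i).integral_comp_comm
          ((hmart.integrable (n+1)).integrableOn)).symm
      rw [← e1, ← e2, this]
    · exact (hsm n).aestronglyMeasurable
  have h2 := condExp_sub (m := ℱ n) (μ := μ) (hintc (n+1)) (hintc n)
  have h3 : μ[fun ω => S n ω i | ℱ n] =ᵐ[μ] fun ω => S n ω i :=
    (condExp_of_stronglyMeasurable (ℱ.le n) (hsm n) (hintc n)).symm ▸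
      EventuallyEq.rfl
  calc μ[fun ω => S (n+1) ω i - S n ω i | ℱ n]
      =ᵐ[μ] μ[fun ω => S (n+1) ω i | ℱ n] - μ[fun ω => S n ω i | ℱ n] := h2
    _ =ᵐ[μ] 0 := by
        filter_upwards [h1, h3] with ω hω1 hω2
        simp [Pi.sub_apply, ← hω1, hω2]

/-- Multiplying an integrable function with zero conditional expectation by a bounded
`m`-measurable function keeps integrability and zero conditional expectation. -/
lemma aux_mul_condexp_zero {m : MeasurableSpace Ω} (hm : m ≤ m0) {f X : Ω → ℝ}
    (hf : StronglyMeasurable[m] f) {c : ℝ} (hfb : ∀ ω, |f ω| ≤ c)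
    (hX : Integrable X μ) (hXc : μ[X|m] =ᵐ[μ] 0) :
    Integrable (fun ω => f ω * X ω) μ ∧ μ[fun ω => f ω * X ω|m] =ᵐ[μ] 0 := by
  have hint : Integrable (fun ω => f ω * X ω) μ :=
    hX.bdd_mul ((hf.mono hm).aestronglyMeasurable) (Eventually.of_forall fun ω => by rw [Real.norm_eq_abs]; exact hfb ω)
  refine ⟨hint, ?_⟩
  have := condExp_mul_of_stronglyMeasurable_left hf hint hX
  refine this.trans ?_
  filter_upwards [hXc] with ω hω
  simp [Pi.mul_apply, hω]

lemma aux_indicator_step (ℱ : Filtration ℕ m0) {d : ℕ} {S : ℕ → Ω → (Fin d → ℝ)}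
    (hmart : Martingale S ℱ μ) {h : ℕ → Ω → (Fin d → ℝ)}
    (hpred : ∀ n, StronglyMeasurable[ℱ n] (h (n + 1))) (n : ℕ) {A : Set Ω}
    (hA : MeasurableSet[ℱ n] A) {c : ℝ} (hAc : ∀ ω ∈ A, ∀ i, |h (n+1) ω i| ≤ c) :
    Integrable (A.indicator fun ω => ∑ i, h (n+1) ω i * (S (n+1) ω i - S n ω i)) μ ∧
      μ[A.indicator fun ω => ∑ i, h (n+1) ω i * (S (n+1) ω i - S n ω i) | ℱ n] =ᵐ[μ] 0 := by
  have hX : ∀ i : Fin d, Integrable (fun ω => S (n+1) ω i - S n ω i) μ := fun i =>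
    (ContinuousLinearMap.proj (R := ℝ) (φ := fun _ : Fin d => ℝ) i).integrable_comp
      ((hmart.integrable (n+1)).sub (hmart.integrable n))
  set f : Fin d → Ω → ℝ := fun i => A.indicator (fun ω => h (n+1) ω i) with hf
  have hfsm : ∀ i, StronglyMeasurable[ℱ n] (f i) := fun i =>
    ((continuous_apply i).comp_stronglyMeasurable (hpred n)).indicator hA
  have hfb : ∀ i, ∀ ω, |f i ω| ≤ max c 0 := by
    intro i ω
    by_cases hω : ω ∈ A
    · simp only [hf, Set.indicator_of_mem hω]
      exact le_max_of_le_left (hAc ω hω i)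
    · simp [hf, Set.indicator_of_notMem hω]
  have hterm : ∀ i : Fin d, Integrable (fun ω => f i ω * (S (n+1) ω i - S n ω i)) μ ∧
      μ[fun ω => f i ω * (S (n+1) ω i - S n ω i)|ℱ n] =ᵐ[μ] 0 := fun i =>
    aux_mul_condexp_zero (ℱ.le n) (hfsm i) (hfb i) (hX i)
      (aux_comp_condexp_zero ℱ hmart n i)
  have hkey : (A.indicator fun ω => ∑ i, h (n+1) ω i * (S (n+1) ω i - S n ω i))
      = fun ω => ∑ i, f i ω * (S (n+1) ω i - S n ω i) := by
    funext ω
    by_cases hω : ω ∈ A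
    · simp [Set.indicator_of_mem hω, hf]
    · simp [Set.indicator_of_notMem hω, hf]
  rw [hkey]
  constructor
  · exact integrable_finset_sum _ (fun i _ => (hterm i).1)
  · have hsum : (fun ω => ∑ i : Fin d, f i ω * (S (n+1) ω i - S n ω i))
        = ∑ i : Fin d, fun ω => f i ω * (S (n+1) ω i - S n ω i) := by
      funext ω; simp [Finset.sum_apply]
    rw [hsum]
    refine (condExp_finsetSum (fun i _ => (hterm i).1) (ℱ n)).trans ?_
    have hall : ∀ᵐ ω ∂μ, ∀ i : Fin d,
        (μ[fun ω => f i ω * (S (n+1) ω i - S n ω i)|ℱ n]) ω = 0 :=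
      ae_all_iff.mpr fun i => (hterm i).2
    filter_upwards [hall] with ω hω
    simp [Finset.sum_apply, hω]

lemma aux_B_mem (ℱ : Filtration ℕ m0) {d : ℕ} {h : ℕ → Ω → (Fin d → ℝ)}
    (hpred : ∀ n, StronglyMeasurable[ℱ n] (h (n + 1))) (n : ℕ) (c : ℕ) :
    MeasurableSet[ℱ n] {ω | ∀ i, |h (n+1) ω i| ≤ (c : ℝ)} := by
  have : {ω | ∀ i, |h (n+1) ω i| ≤ (c : ℝ)}
      = ⋂ i, (fun ω => |h (n+1) ω i|) ⁻¹' (Set.Iic (c : ℝ)) := by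
    ext ω; simp [Set.mem_iInter]
  rw [this]
  refine MeasurableSet.iInter fun i => ?_
  have hm : Measurable[ℱ n] (fun ω => h (n+1) ω i) :=
    ((continuous_apply i).comp_stronglyMeasurable (hpred n)).measurable
  have heq : (fun ω => |h (n+1) ω i|) ⁻¹' (Set.Iic (c : ℝ))
      = (fun ω => h (n+1) ω i) ⁻¹' (Set.Icc (-(c : ℝ)) (c : ℝ)) := by
    ext ω; simp [abs_le]
  rw [heq]
  exact hm measurableSet_Icc

lemma aux_B_exists {d : ℕ} (g : Fin d → ℝ) : ∃ c : ℕ, ∀ i, |g i| ≤ (c : ℝ) := by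
  refine ⟨⌈∑ i, |g i|⌉₊, fun i => ?_⟩
  calc |g i| ≤ ∑ j, |g j| := Finset.single_le_sum (fun j _ => abs_nonneg (g j)) (Finset.mem_univ i)
    _ ≤ _ := Nat.le_ceil _

lemma aux_W_sm (ℱ : Filtration ℕ m0) {d : ℕ} {S : ℕ → Ω → (Fin d → ℝ)}
    (hmart : Martingale S ℱ μ) {h : ℕ → Ω → (Fin d → ℝ)}
    (hpred : ∀ n, StronglyMeasurable[ℱ n] (h (n + 1))) (n : ℕ) :
    StronglyMeasurable (fun ω => ∑ i, h (n+1) ω i * (S (n+1) ω i - S n ω i)) := by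
  refine Finset.stronglyMeasurable_fun_sum _ fun i _ => ?_
  exact (((continuous_apply i).comp_stronglyMeasurable (hpred n)).mono (ℱ.le n)).mul
    ((((continuous_apply i).comp_stronglyMeasurable (hmart.stronglyAdapted (n+1))).mono
      (ℱ.le (n+1))).sub
      (((continuous_apply i).comp_stronglyMeasurable (hmart.stronglyAdapted n)).mono (ℱ.le n)))

lemma aux_step (ℱ : Filtration ℕ m0) {d : ℕ} {S : ℕ → Ω → (Fin d → ℝ)}
    (hmart : Martingale S ℱ μ) {h : ℕ → Ω → (Fin d → ℝ)}
    (hpred : ∀ n, StronglyMeasurable[ℱ n] (h (n + 1))) (n : ℕ)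
    (hneg : (∫⁻ ω, ENNReal.ofReal (-(∑ i, h (n+1) ω i * (S (n+1) ω i - S n ω i))) ∂μ) < ⊤) :
    Integrable (fun ω => ∑ i, h (n+1) ω i * (S (n+1) ω i - S n ω i)) μ ∧
      (∫ ω, ∑ i, h (n+1) ω i * (S (n+1) ω i - S n ω i) ∂μ) = 0 := by
  set W : Ω → ℝ := fun ω => ∑ i, h (n+1) ω i * (S (n+1) ω i - S n ω i) with hW
  have hWsm : StronglyMeasurable W := aux_W_sm ℱ hmart hpred n
  set B : ℕ → Set Ω := fun c => {ω | ∀ i, |h (n+1) ω i| ≤ (c : ℝ)} with hB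
  have hBmeas : ∀ c, MeasurableSet[ℱ n] (B c) := fun c => aux_B_mem ℱ hpred n c
  have hBsub : ∀ {c c' : ℕ}, c ≤ c' → B c ⊆ B c' := fun {c c'} hcc ω hω i =>
    le_trans (hω i) (by exact_mod_cast hcc)
  have hBcover : ∀ ω, ∃ c : ℕ, ω ∈ B c := fun ω => aux_B_exists (h (n+1) ω)
  have hIc : ∀ c : ℕ, Integrable ((B c).indicator W) μ ∧ μ[(B c).indicator W | ℱ n] =ᵐ[μ] 0 :=
    fun c => aux_indicator_step ℱ hmart hpred n (hBmeas c) (fun ω hω i => hω i)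
  have hIint : ∀ c : ℕ, (∫ ω, (B c).indicator W ω ∂μ) = 0 := by
    intro c
    calc (∫ ω, (B c).indicator W ω ∂μ) = ∫ ω, (μ[(B c).indicator W | ℱ n]) ω ∂μ :=
          (integral_condExp (ℱ.le n)).symm
      _ = ∫ ω, (0 : Ω → ℝ) ω ∂μ := integral_congr_ae (hIc c).2
      _ = 0 := by simp
  have hposneg : ∀ c : ℕ, (∫⁻ ω, ENNReal.ofReal ((B c).indicator W ω) ∂μ)
      = ∫⁻ ω, ENNReal.ofReal (-((B c).indicator W ω)) ∂μ := by
    intro c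
    have h1 := integral_eq_lintegral_pos_part_sub_lintegral_neg_part (hIc c).1
    rw [hIint c] at h1
    have hfin1 : (∫⁻ ω, ENNReal.ofReal ((B c).indicator W ω) ∂μ) ≠ ⊤ := by
      refine ne_of_lt (lt_of_le_of_lt (lintegral_mono fun ω => ?_) (hIc c).1.2)
      calc ENNReal.ofReal ((B c).indicator W ω) ≤ ENNReal.ofReal |(B c).indicator W ω| :=
            ENNReal.ofReal_le_ofReal (le_abs_self _)
        _ = ↑‖(B c).indicator W ω‖₊ := by
            rw [← Real.nnnorm_abs, ← enorm_eq_nnnorm, Real.enorm_eq_ofReal (abs_nonneg _)]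
    have hfin2 : (∫⁻ ω, ENNReal.ofReal (-((B c).indicator W ω)) ∂μ) ≠ ⊤ := by
      refine ne_of_lt (lt_of_le_of_lt (lintegral_mono fun ω => ?_) (hIc c).1.2)
      calc ENNReal.ofReal (-((B c).indicator W ω)) ≤ ENNReal.ofReal |(B c).indicator W ω| :=
            ENNReal.ofReal_le_ofReal (neg_le_abs _)
        _ = ↑‖(B c).indicator W ω‖₊ := by
            rw [← Real.nnnorm_abs, ← enorm_eq_nnnorm, Real.enorm_eq_ofReal (abs_nonneg _)]
    have h2 := sub_eq_zero.mp h1.symm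
    exact (ENNReal.toReal_eq_toReal_iff' hfin1 hfin2).mp h2
  have hposbdd : ∀ c : ℕ, (∫⁻ ω, ENNReal.ofReal ((B c).indicator W ω) ∂μ)
      ≤ ∫⁻ ω, ENNReal.ofReal (-(W ω)) ∂μ := by
    intro c
    rw [hposneg c]
    refine lintegral_mono fun ω => ?_
    by_cases hω : ω ∈ B c
    · rw [Set.indicator_of_mem hω]
    · rw [Set.indicator_of_notMem hω]
      simp only [neg_zero, ENNReal.ofReal_zero]
      exact zero_le
  -- monotone convergence to remove the truncation
  have hposfin : (∫⁻ ω, ENNReal.ofReal (W ω) ∂μ) < ⊤ := by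
    set F : ℕ → Ω → ℝ≥0∞ := fun c ω => (B c).indicator (fun ω => ENNReal.ofReal (W ω)) ω with hF
    have hFmeas : ∀ c, Measurable (F c) :=
      fun c => (hWsm.measurable.ennreal_ofReal).indicator ((ℱ.le n) _ (hBmeas c))
    have hFmono : Monotone F := fun c c' hcc ω => by
      simp only [hF]
      by_cases hω : ω ∈ B c
      · rw [Set.indicator_of_mem hω, Set.indicator_of_mem (hBsub hcc hω)]
      · rw [Set.indicator_of_notMem hω]; exact zero_le
    have hFsup : ∀ ω, (⨆ c, F c ω) = ENNReal.ofReal (W ω) := by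
      intro ω
      refine le_antisymm (iSup_le fun c => ?_) ?_
      · simp only [hF]
        by_cases hω : ω ∈ B c
        · rw [Set.indicator_of_mem hω]
        · rw [Set.indicator_of_notMem hω]; exact zero_le
      · obtain ⟨c, hc⟩ := hBcover ω
        exact le_iSup_of_le c (by simp only [hF]; rw [Set.indicator_of_mem hc])
    have heq : (∫⁻ ω, ENNReal.ofReal (W ω) ∂μ) = ⨆ c, ∫⁻ ω, F c ω ∂μ := by
      rw [← lintegral_iSup hFmeas hFmono]
      exact lintegral_congr fun ω => (hFsup ω).symm
    have hFind : ∀ c, (∫⁻ ω, F c ω ∂μ) = ∫⁻ ω, ENNReal.ofReal ((B c).indicator W ω) ∂μ := by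
      intro c
      refine lintegral_congr fun ω => ?_
      simp only [hF]
      by_cases hω : ω ∈ B c
      · simp only [Set.indicator_of_mem hω]
      · simp only [Set.indicator_of_notMem hω, ENNReal.ofReal_zero]
    rw [heq]
    refine lt_of_le_of_lt (iSup_le fun c => ?_) hneg
    rw [hFind c]
    exact hposbdd c
  have hWint : Integrable W μ := by
    refine ⟨hWsm.aestronglyMeasurable, ?_⟩
    rw [hasFiniteIntegral_iff_norm]
    have hle : ∀ ω, ENNReal.ofReal ‖W ω‖ ≤ ENNReal.ofReal (W ω) + ENNReal.ofReal (-(W ω)) := by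
      intro ω
      rcases le_total 0 (W ω) with hw | hw
      · rw [Real.norm_eq_abs, abs_of_nonneg hw]; exact le_add_right le_rfl
      · rw [Real.norm_eq_abs, abs_of_nonpos hw]; exact le_add_left le_rfl
    calc (∫⁻ ω, ENNReal.ofReal ‖W ω‖ ∂μ)
        ≤ ∫⁻ ω, (ENNReal.ofReal (W ω) + ENNReal.ofReal (-(W ω))) ∂μ := lintegral_mono hle
      _ = (∫⁻ ω, ENNReal.ofReal (W ω) ∂μ) + ∫⁻ ω, ENNReal.ofReal (-(W ω)) ∂μ :=
          lintegral_add_left hWsm.measurable.ennreal_ofReal _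
      _ < ⊤ := ENNReal.add_lt_top.mpr ⟨hposfin, hneg⟩
  refine ⟨hWint, ?_⟩
  -- dominated convergence
  have htend : Tendsto (fun c : ℕ => ∫ ω, (B c).indicator W ω ∂μ) atTop (𝓝 (∫ ω, W ω ∂μ)) := by
    refine tendsto_integral_of_dominated_convergence (fun ω => |W ω|)
      (fun c => (hIc c).1.1) hWint.abs (fun c => ?_) ?_
    · refine Eventually.of_forall fun ω => ?_
      by_cases hω : ω ∈ B c
      · rw [Set.indicator_of_mem hω, Real.norm_eq_abs]
      · rw [Set.indicator_of_notMem hω]; simp [abs_nonneg]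
    · refine Eventually.of_forall fun ω => ?_
      obtain ⟨c₀, hc₀⟩ := hBcover ω
      refine tendsto_atTop_of_eventually_const (i₀ := c₀) fun c hc => ?_
      rw [Set.indicator_of_mem (hBsub hc hc₀)]
  have : Tendsto (fun _ : ℕ => (0 : ℝ)) atTop (𝓝 (∫ ω, W ω ∂μ)) := by
    simpa [hIint] using htend
  exact tendsto_nhds_unique this tendsto_const_nhds

/-- The key conditional step: if the negative part of `X + W` is integrable where `X` is
`ℱ n`-measurable and `W` is the one-step gain, then the negative part of `X` is integrable. -/
lemma aux_prev (ℱ : Filtration ℕ m0) {d : ℕ} {S : ℕ → Ω → (Fin d → ℝ)}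
    (hmart : Martingale S ℱ μ) {h : ℕ → Ω → (Fin d → ℝ)}
    (hpred : ∀ n, StronglyMeasurable[ℱ n] (h (n + 1))) (n : ℕ) {X : Ω → ℝ}
    (hXsm : StronglyMeasurable[ℱ n] X)
    (hGneg : Integrable
      (fun ω => max (-(X ω + ∑ i, h (n+1) ω i * (S (n+1) ω i - S n ω i))) 0) μ) :
    Integrable (fun ω => max (-(X ω)) 0) μ := by
  set W : Ω → ℝ := fun ω => ∑ i, h (n+1) ω i * (S (n+1) ω i - S n ω i) with hW
  set Gneg : Ω → ℝ := fun ω => max (-(X ω + W ω)) 0 with hGnegdef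
  set Z : Ω → ℝ := μ[Gneg | ℱ n] with hZ
  set A : ℕ → Set Ω := fun c =>
    {ω | |X ω| ≤ (c : ℝ)} ∩ {ω | ∀ i, |h (n+1) ω i| ≤ (c : ℝ)} with hA
  have hAmeas : ∀ c : ℕ, MeasurableSet[ℱ n] (A c) := by
    intro c
    refine MeasurableSet.inter ?_ (aux_B_mem ℱ hpred n c)
    have heq : {ω | |X ω| ≤ (c : ℝ)} = X ⁻¹' (Set.Icc (-(c : ℝ)) (c : ℝ)) := by
      ext ω; simp [abs_le]
    rw [heq]
    exact hXsm.measurable measurableSet_Icc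
  have hIc : ∀ c : ℕ, Integrable ((A c).indicator W) μ ∧ μ[(A c).indicator W | ℱ n] =ᵐ[μ] 0 :=
    fun c => aux_indicator_step ℱ hmart hpred n (hAmeas c) (fun ω hω i => hω.2 i)
  -- the indicator of X is integrable and its condexp is itself
  have hXIint : ∀ c : ℕ, Integrable ((A c).indicator X) μ := by
    intro c
    refine Integrable.mono' (integrable_const (c : ℝ))
      ((hXsm.indicator (hAmeas c)).mono (ℱ.le n)).aestronglyMeasurable
      (Eventually.of_forall fun ω => ?_)
    by_cases hω : ω ∈ A c
    · rw [Set.indicator_of_mem hω, Real.norm_eq_abs]; exact hω.1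
    · rw [Set.indicator_of_notMem hω]; simp
  have hXIce : ∀ c : ℕ, μ[(A c).indicator X | ℱ n] =ᵐ[μ] (A c).indicator X := by
    intro c
    rw [condExp_of_stronglyMeasurable (ℱ.le n) (hXsm.indicator (hAmeas c)) (hXIint c)]
  -- key a.e. inequality for each truncation level
  have hkey : ∀ c : ℕ, ∀ᵐ ω ∂μ, -(Z ω) ≤ (A c).indicator X ω := by
    intro c
    have hptwise : (fun ω => -(Gneg ω)) ≤ᵐ[μ]
        fun ω => (A c).indicator X ω + (A c).indicator W ω := by
      refine Eventually.of_forall fun ω => ?_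
      dsimp only
      by_cases hω : ω ∈ A c
      · rw [Set.indicator_of_mem hω, Set.indicator_of_mem hω]
        have h1 : -(X ω + W ω) ≤ Gneg ω := le_max_left _ _
        linarith
      · rw [Set.indicator_of_notMem hω, Set.indicator_of_notMem hω]
        have h1 : (0 : ℝ) ≤ Gneg ω := le_max_right _ _
        linarith
    have hmono := condExp_mono (m := ℱ n) hGneg.neg ((hXIint c).add (hIc c).1) hptwise
    have hneg : μ[fun ω => -(Gneg ω) | ℱ n] =ᵐ[μ] fun ω => -(Z ω) := by
      have := condExp_neg (m := ℱ n) (μ := μ) Gneg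
      filter_upwards [this] with ω hω
      exact hω
    have hadd : μ[fun ω => (A c).indicator X ω + (A c).indicator W ω | ℱ n]
        =ᵐ[μ] fun ω => (A c).indicator X ω := by
      have h1 := condExp_add (m := ℱ n) (μ := μ) (hXIint c) (hIc c).1
      refine h1.trans ?_
      filter_upwards [hXIce c, (hIc c).2] with ω h2 h3
      simp [h2, h3]
    filter_upwards [hmono, hneg, hadd] with ω h1 h2 h3
    rw [← h2]
    exact h1.trans (le_of_eq h3)
  have hae : ∀ᵐ ω ∂μ, -(Z ω) ≤ X ω := by
    have hall := ae_all_iff.mpr hkey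
    filter_upwards [hall] with ω hω
    obtain ⟨c₁, hc₁⟩ := aux_B_exists (h (n+1) ω)
    obtain ⟨c₂, hc₂⟩ := aux_B_exists (fun _ : Fin 1 => X ω)
    have hmem : ω ∈ A (c₁ + c₂) := by
      constructor
      · refine le_trans (hc₂ 0) ?_
        exact_mod_cast Nat.le_add_left c₂ c₁
      · intro i
        refine le_trans (hc₁ i) ?_
        exact_mod_cast Nat.le_add_right c₁ c₂
    have := hω (c₁ + c₂)
    rwa [Set.indicator_of_mem hmem] at this
  refine Integrable.mono' ((integrable_condExp : Integrable (μ[Gneg|ℱ n]) μ).abs)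
    (((hXsm.mono (ℱ.le n)).neg.sup stronglyMeasurable_const).aestronglyMeasurable)
    ?_
  filter_upwards [hae] with ω hω
  rw [Real.norm_eq_abs, abs_of_nonneg (le_max_right (-(X ω)) 0)]
  rcases le_total (-(X ω)) 0 with hx | hx
  · rw [max_eq_right hx]; exact abs_nonneg _
  · rw [max_eq_left hx]
    exact le_trans (by linarith) (le_abs_self _)

lemma aux_main (ℱ : Filtration ℕ m0) {d : ℕ} {S : ℕ → Ω → (Fin d → ℝ)}
    (hmart : Martingale S ℱ μ) {h : ℕ → Ω → (Fin d → ℝ)}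
    (hpred : ∀ n, StronglyMeasurable[ℱ n] (h (n + 1))) (N : ℕ)
    (hneg : Integrable (fun ω =>
      max (-(∑ n ∈ Finset.range N, ∑ i, h (n+1) ω i * (S (n+1) ω i - S n ω i))) 0) μ) :
    Integrable (fun ω => ∑ n ∈ Finset.range N, ∑ i, h (n+1) ω i * (S (n+1) ω i - S n ω i)) μ ∧
      (∫ ω, ∑ n ∈ Finset.range N, ∑ i, h (n+1) ω i * (S (n+1) ω i - S n ω i) ∂μ) = 0 := by
  induction N with
  | zero => simp
  | succ N ih =>
    have hsplit : (fun ω : Ω => ∑ n ∈ Finset.range (N+1), ∑ i,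
        h (n+1) ω i * (S (n+1) ω i - S n ω i))
        = fun ω => (∑ n ∈ Finset.range N, ∑ i, h (n+1) ω i * (S (n+1) ω i - S n ω i))
          + ∑ i, h (N+1) ω i * (S (N+1) ω i - S N ω i) := by
      funext ω; rw [Finset.sum_range_succ]
    set X : Ω → ℝ :=
      fun ω => ∑ n ∈ Finset.range N, ∑ i, h (n+1) ω i * (S (n+1) ω i - S n ω i) with hXdef
    set W : Ω → ℝ := fun ω => ∑ i, h (N+1) ω i * (S (N+1) ω i - S N ω i) with hWdef
    have hXsm : StronglyMeasurable[ℱ N] X := by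
      refine Finset.stronglyMeasurable_fun_sum _ fun n hn => ?_
      have hn' : n + 1 ≤ N := Finset.mem_range.mp hn
      refine Finset.stronglyMeasurable_fun_sum _ fun i _ => ?_
      exact (((continuous_apply i).comp_stronglyMeasurable (hpred n)).mono
          (ℱ.mono (le_trans (Nat.le_succ n) hn'))).mul
        ((((continuous_apply i).comp_stronglyMeasurable (hmart.stronglyAdapted (n+1))).mono
          (ℱ.mono hn')).sub
          (((continuous_apply i).comp_stronglyMeasurable (hmart.stronglyAdapted n)).mono
            (ℱ.mono (le_trans (Nat.le_succ n) hn'))))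
    have hneg' : Integrable (fun ω => max (-(X ω + W ω)) 0) μ := by
      have heq : (fun ω => max (-(∑ n ∈ Finset.range (N+1), ∑ i,
          h (n+1) ω i * (S (n+1) ω i - S n ω i))) 0)
          = fun ω => max (-(X ω + W ω)) 0 := by
        funext ω; rw [Finset.sum_range_succ]
      rw [heq] at hneg
      exact hneg
    have hXneg : Integrable (fun ω => max (-(X ω)) 0) μ :=
      aux_prev ℱ hmart hpred N hXsm hneg'
    obtain ⟨hXint, hXzero⟩ := ih hXneg
    -- the increment has integrable negative part
    have hWneg : (∫⁻ ω, ENNReal.ofReal (-(W ω)) ∂μ) < ⊤ := by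
      have hle : ∀ ω, ENNReal.ofReal (-(W ω))
          ≤ (‖max (-(X ω + W ω)) 0‖₊ : ℝ≥0∞) + (‖X ω‖₊ : ℝ≥0∞) := by
        intro ω
        have h1 : -(W ω) ≤ max (-(X ω + W ω)) 0 + |X ω| := by
          have := le_max_left (-(X ω + W ω)) 0
          have := le_abs_self (X ω)
          linarith
        calc ENNReal.ofReal (-(W ω)) ≤ ENNReal.ofReal (max (-(X ω + W ω)) 0 + |X ω|) :=
              ENNReal.ofReal_le_ofReal h1
          _ ≤ ENNReal.ofReal (max (-(X ω + W ω)) 0) + ENNReal.ofReal |X ω| :=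
              ENNReal.ofReal_add_le
          _ = _ := by
              rw [← enorm_eq_nnnorm, Real.enorm_eq_ofReal (le_max_right _ _), ← Real.nnnorm_abs (X ω),
                ← enorm_eq_nnnorm, Real.enorm_eq_ofReal (abs_nonneg _)]
      calc (∫⁻ ω, ENNReal.ofReal (-(W ω)) ∂μ)
          ≤ ∫⁻ ω, ((‖max (-(X ω + W ω)) 0‖₊ : ℝ≥0∞) + (‖X ω‖₊ : ℝ≥0∞)) ∂μ := lintegral_mono hle
        _ = (∫⁻ ω, (‖max (-(X ω + W ω)) 0‖₊ : ℝ≥0∞) ∂μ) + ∫⁻ ω, (‖X ω‖₊ : ℝ≥0∞) ∂μ :=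
            lintegral_add_left' hneg'.aestronglyMeasurable.enorm _
        _ < ⊤ := ENNReal.add_lt_top.mpr ⟨hneg'.2, hXint.2⟩
    obtain ⟨hWint, hWzero⟩ := aux_step ℱ hmart hpred N hWneg
    constructor
    · rw [hsplit]
      exact hXint.add hWint
    · have : (∫ ω, (X ω + W ω) ∂μ) = 0 := by
        rw [integral_add hXint hWint, hXzero, hWzero, add_zero]
      calc (∫ ω, ∑ n ∈ Finset.range (N+1), ∑ i,
            h (n+1) ω i * (S (n+1) ω i - S n ω i) ∂μ)
          = ∫ ω, (X ω + W ω) ∂μ := by rw [← hsplit]  -- may need congr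
        _ = 0 := this

end Aux

/-- If `S` is a `d`-dimensional martingale and `h` a predictable strategy, one-sided
integrability of the terminal gain `(h·S)_N = Σ_{n=1}^N h_n·(S_n − S_{n−1})` implies that
it is integrable with expectation zero. -/
theorem stmt19 {Ω : Type*} {m0 : MeasurableSpace Ω} (μ : Measure Ω)
    [IsProbabilityMeasure μ] (ℱ : Filtration ℕ m0) (d N : ℕ)
    (S : ℕ → Ω → (Fin d → ℝ)) (hmart : Martingale S ℱ μ)
    (h : ℕ → Ω → (Fin d → ℝ)) (hpred : ∀ n, StronglyMeasurable[ℱ n] (h (n + 1)))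
    (G : Ω → ℝ)
    (hG : G = fun ω => ∑ n ∈ Finset.range N, ∑ i, h (n + 1) ω i * (S (n + 1) ω i - S n ω i))
    (hint : (∫⁻ ω, ENNReal.ofReal (-(G ω)) ∂μ) < ⊤) :
    Integrable G μ ∧ (∫ ω, G ω ∂μ) = 0 := by
  subst hG
  have hGsm : StronglyMeasurable (fun ω : Ω =>
      ∑ n ∈ Finset.range N, ∑ i, h (n + 1) ω i * (S (n + 1) ω i - S n ω i)) :=
    Finset.stronglyMeasurable_fun_sum _ fun n _ => aux_W_sm ℱ hmart hpred n
  have hneg : Integrable (fun ω =>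
      max (-(∑ n ∈ Finset.range N, ∑ i, h (n+1) ω i * (S (n+1) ω i - S n ω i))) 0) μ := by
    refine ⟨(hGsm.neg.sup stronglyMeasurable_const).aestronglyMeasurable, ?_⟩
    rw [hasFiniteIntegral_iff_norm]
    refine lt_of_le_of_lt (le_of_eq (lintegral_congr fun ω => ?_)) hint
    set x : ℝ := -(∑ n ∈ Finset.range N, ∑ i, h (n+1) ω i * (S (n+1) ω i - S n ω i)) with hx
    rcases le_total x 0 with hx0 | hx0
    · rw [max_eq_right hx0, norm_zero, ENNReal.ofReal_zero, ENNReal.ofReal_of_nonpos hx0]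
    · rw [max_eq_left hx0, Real.norm_eq_abs, abs_of_nonneg hx0]
  exact aux_main ℱ hmart hpred N hneg
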